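/- Let ρ < 0 be a real number. The number of occurring ρ-avoided words w in x with |w| > 2 is at most 2n. -/

import Mathlib

/-- The observed frequency `f(w)`: the number of starting positions at which
the word `w` occurs in the word `x` (occurrences may overlap). -/
def occ {α : Type*} [DecidableEq α] (x w : List α) : ℕ :=
  ((Finset.range (x.length + 1)).filter (fun i => (x.drop i).take w.length = w)).card

/-- The expected frequency `E(w)` of `w` in `x`:
`E(w) = f(w_p)·f(w_s)/f(w_i)` if `f(w_i) > 0`, and `E(w) = 0` otherwise,
where `w_p = w.dropLast` is the longest proper prefix of `w`,
`w_s = w.tail` is the longest proper suffix of `w`, and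
`w_i = w.tail.dropLast` is the infix of `w` obtained by deleting its
first and last letters. -/
noncomputable def expFreq {α : Type*} [DecidableEq α] (x w : List α) : ℝ :=
  if 0 < occ x w.tail.dropLast then
    ((occ x w.dropLast : ℝ) * (occ x w.tail : ℝ)) / (occ x w.tail.dropLast : ℝ)
  else 0

/-- The standard deviation `std(w) = (f(w) − E(w)) / max(√E(w), 1)`. -/
noncomputable def stdDev {α : Type*} [DecidableEq α] (x w : List α) : ℝ :=
  ((occ x w : ℝ) - expFreq x w) / max (Real.sqrt (expFreq x w)) 1

/-- `w` is a minimal absent word of `x`: `w` is absent from `x`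
(`f(w) = 0`) and every proper factor of `w` occurs in `x`. -/
def IsMAW {α : Type*} [DecidableEq α] (x w : List α) : Prop :=
  occ x w = 0 ∧ ∀ v : List α, v <:+: w → v ≠ w → 0 < occ x v

/-! ### Auxiliary machinery -/

/-- The set of occurrence (starting) positions of `w` in `x`. -/
def Occ {α : Type*} [DecidableEq α] (x w : List α) : Finset ℕ :=
  (Finset.range (x.length + 1)).filter (fun i => (x.drop i).take w.length = w)

lemma occ_eq_card {α : Type*} [DecidableEq α] (x w : List α) :
    occ x w = (Occ x w).card := rfl

lemma mem_Occ {α : Type*} [DecidableEq α] {x w : List α} {i : ℕ} :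
    i ∈ Occ x w ↔ i < x.length + 1 ∧ (x.drop i).take w.length = w := by
  simp [Occ]

/-- If `w` is a prefix of `v`, every occurrence of `v` is one of `w`. -/
lemma Occ_anti {α : Type*} [DecidableEq α] {w v : List α} (x : List α) (h : w <+: v) :
    Occ x v ⊆ Occ x w := by
  intro i hi
  rw [mem_Occ] at hi ⊢
  refine ⟨hi.1, ?_⟩
  have hl : w.length ≤ v.length := h.length_le
  calc (x.drop i).take w.length = ((x.drop i).take v.length).take w.length := by
        rw [List.take_take, min_eq_left hl]
    _ = v.take w.length := by rw [hi.2]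
    _ = w := (List.prefix_iff_eq_take.mp h).symm

/-- Occurrence sets are laminar: two words occurring at a common position are
prefix-comparable. -/
lemma Occ_laminar {α : Type*} [DecidableEq α] {x w v : List α} {i : ℕ}
    (hw : i ∈ Occ x w) (hv : i ∈ Occ x v) : w <+: v ∨ v <+: w := by
  rw [mem_Occ] at hw hv
  rcases le_total w.length v.length with hle | hle
  · left
    have : w = v.take w.length := by
      rw [← hv.2, List.take_take, min_eq_left hle, hw.2]
    rw [this]; exact List.take_prefix _ _
  · right
    have : v = w.take v.length := by
      rw [← hw.2, List.take_take, min_eq_left hle, hv.2]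
    rw [this]; exact List.take_prefix _ _

/-- A proper prefix of `v` is a prefix of `v.dropLast`. -/
lemma prefix_dropLast {α : Type*} {w v : List α} (h : w <+: v)
    (hlt : w.length < v.length) : w <+: v.dropLast := by
  have : w = v.dropLast.take w.length := by
    rw [List.dropLast_eq_take, List.take_take, min_eq_left (by omega),
      ← List.prefix_iff_eq_take.mp h]
  rw [this]; exact List.take_prefix _ _

/-- Key: for an occurring `ρ`-avoided word (`ρ < 0`), the longest proper prefix
occurs strictly more often. -/
lemma occ_lt_occ_dropLast {α : Type*} [DecidableEq α] {ρ : ℝ} (hρ : ρ < 0)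
    {x w : List α} (hocc : 0 < occ x w) (hstd : stdDev x w ≤ ρ) :
    occ x w < occ x w.dropLast := by
  have hM : (0:ℝ) < max (Real.sqrt (expFreq x w)) 1 := lt_of_lt_of_le one_pos (le_max_right _ _)
  have hM1 : (1:ℝ) ≤ max (Real.sqrt (expFreq x w)) 1 := le_max_right _ _
  have hnum : ((occ x w : ℝ) - expFreq x w) ≤ ρ * max (Real.sqrt (expFreq x w)) 1 := by
    rw [stdDev, div_le_iff₀ hM] at hstd; exact hstd
  have hneg : ((occ x w : ℝ)) < expFreq x w := by nlinarith
  have hiocc : 0 < occ x w.tail.dropLast := by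
    by_contra h
    rw [expFreq, if_neg h] at hneg
    have : (0:ℝ) < (occ x w : ℝ) := by exact_mod_cast hocc
    linarith
  rw [expFreq, if_pos hiocc] at hneg
  have hfi : (0:ℝ) < (occ x w.tail.dropLast : ℝ) := by exact_mod_cast hiocc
  rw [lt_div_iff₀ hfi] at hneg
  have hsi : (occ x w.tail : ℝ) ≤ (occ x w.tail.dropLast : ℝ) := by
    have : Occ x w.tail ⊆ Occ x w.tail.dropLast :=
      Occ_anti x (List.dropLast_prefix w.tail)
    exact_mod_cast Finset.card_le_card this
  have hp0 : (0:ℝ) ≤ (occ x w.dropLast : ℝ) := by positivity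
  have hfinal : (occ x w : ℝ) * (occ x w.tail.dropLast : ℝ) <
      (occ x w.dropLast : ℝ) * (occ x w.tail.dropLast : ℝ) := by nlinarith
  have : occ x w * occ x w.tail.dropLast < occ x w.dropLast * occ x w.tail.dropLast := by
    exact_mod_cast hfinal
  exact lt_of_mul_lt_mul_right this (Nat.zero_le _)

/-- A laminar family of distinct nonempty subsets of `U` has at most `2|U| - 1`
members, and at most `2|U| - 2` if `U` itself is not a member. -/
lemma laminar_bound : ∀ (k : ℕ) (L : Finset (Finset ℕ)) (U : Finset ℕ),
    L.card ≤ k →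
    (∀ A ∈ L, A.Nonempty ∧ A ⊆ U) →
    (∀ A ∈ L, ∀ B ∈ L, A ⊆ B ∨ B ⊆ A ∨ Disjoint A B) →
    L.card ≤ 2 * U.card - 1 ∧ (U ∉ L → L.card ≤ 2 * U.card - 2) := by
  intro k
  induction k with
  | zero =>
    intro L U hk _ _
    have : L.card = 0 := Nat.le_zero.mp hk
    omega
  | succ k ih =>
    intro L U hk hmem hlam
    rcases L.eq_empty_or_nonempty with rfl | hLne
    · simp
    obtain ⟨A, hA, hAmax⟩ := L.exists_max_image (fun B => B.card) hLne
    obtain ⟨hAne, hAU⟩ := hmem A hA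
    set Lin := L.filter (fun B => B ⊂ A) with hLin
    set Lout := L.filter (fun B => Disjoint B A) with hLout
    have hALin : A ∉ Lin := by
      simp only [hLin, Finset.mem_filter]
      exact fun h => lt_irrefl _ h.2
    have hALout : A ∉ Lout := by
      simp only [hLout, Finset.mem_filter, disjoint_self, Finset.bot_eq_empty]
      exact fun h => hAne.ne_empty h.2
    have hcover : L ⊆ insert A (Lin ∪ Lout) := by
      intro B hB
      simp only [Finset.mem_insert, Finset.mem_union, hLin, hLout, Finset.mem_filter]
      rcases hlam B hB A hA with h | h | h
      · rcases eq_or_ne B A with rfl | hne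
        · exact Or.inl rfl
        · exact Or.inr (Or.inl ⟨hB, ssubset_of_subset_of_ne h hne⟩)
      · exact Or.inl (Finset.eq_of_subset_of_card_le h (hAmax B hB)).symm
      · exact Or.inr (Or.inr ⟨hB, h⟩)
    have hcard : L.card ≤ 1 + Lin.card + Lout.card := by
      calc L.card ≤ (insert A (Lin ∪ Lout)).card := Finset.card_le_card hcover
        _ ≤ 1 + (Lin ∪ Lout).card := by
            have := Finset.card_insert_le A (Lin ∪ Lout); omega
        _ ≤ 1 + (Lin.card + Lout.card) := by
            have := Finset.card_union_le Lin Lout; omega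
        _ = 1 + Lin.card + Lout.card := by omega
    have hL1 : 1 ≤ L.card := Finset.card_pos.mpr hLne
    have hsubk : ∀ M : Finset (Finset ℕ), M ⊆ L → A ∉ M → M.card ≤ k := by
      intro M hML hAM
      have h1 : M ⊆ L.erase A := fun B hB => Finset.mem_erase.mpr
        ⟨fun h => hAM (h ▸ hB), hML hB⟩
      have h2 := Finset.card_le_card h1
      rw [Finset.card_erase_of_mem hA] at h2
      omega
    have ihin := ih Lin A (hsubk Lin (Finset.filter_subset _ _) hALin)
      (fun B hB => by
        rw [hLin, Finset.mem_filter] at hB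
        exact ⟨(hmem B hB.1).1, hB.2.subset⟩)
      (fun B hB C hC => hlam B (Finset.filter_subset _ _ hB) C (Finset.filter_subset _ _ hC))
    have ihout := ih Lout (U \ A) (hsubk Lout (Finset.filter_subset _ _) hALout)
      (fun B hB => by
        rw [hLout, Finset.mem_filter] at hB
        exact ⟨(hmem B hB.1).1, Finset.subset_sdiff.mpr ⟨(hmem B hB.1).2, hB.2⟩⟩)
      (fun B hB C hC => hlam B (Finset.filter_subset _ _ hB) C (Finset.filter_subset _ _ hC))
    have hA1 : 1 ≤ A.card := Finset.card_pos.mpr hAne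
    have hAle : A.card ≤ U.card := Finset.card_le_card hAU
    have hsdiff : (U \ A).card = U.card - A.card := Finset.card_sdiff_of_subset hAU
    have hout0 : Lout.card = 0 ∨ A.card < U.card := by
      rcases Lout.eq_empty_or_nonempty with h | ⟨B, hB⟩
      · exact Or.inl (by simp [h])
      · right
        rw [hLout, Finset.mem_filter] at hB
        obtain ⟨hBne, hBU⟩ := hmem B hB.1
        have hBUA : B ⊆ U \ A := Finset.subset_sdiff.mpr ⟨hBU, hB.2⟩
        have : 1 ≤ (U \ A).card := Finset.card_pos.mpr (hBne.mono hBUA)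
        omega
    have hUL : U ∉ L → A.card < U.card := by
      intro hU
      rcases eq_or_ne A U with rfl | hne
      · exact absurd hA hU
      · exact Finset.card_lt_card (ssubset_of_subset_of_ne hAU hne)
    have hin1 := ihin.2 hALin
    have hout1 := ihout.1
    refine ⟨by omega, fun hU => by have := hUL hU; omega⟩

/-- If `w` is a proper prefix of an occurring `ρ`-avoided word `v` with the
same occurrence set, we get a contradiction. -/
lemma occ_inj_aux {α : Type*} [DecidableEq α] {ρ : ℝ} (hρ : ρ < 0) {x w v : List α}
    (hv : 0 < occ x v) (hvs : stdDev x v ≤ ρ) (hpre : w <+: v) (hne : w ≠ v)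
    (heq : Occ x w = Occ x v) : False := by
  have hlt : w.length < v.length := by
    rcases lt_or_eq_of_le hpre.length_le with h | h
    · exact h
    · exact absurd (List.prefix_iff_eq_take.mp hpre ▸ (h ▸ (List.take_length : v.take v.length = v) :
        v.take w.length = v)) hne
  have h1 : Occ x v.dropLast ⊆ Occ x w := Occ_anti x (prefix_dropLast hpre hlt)
  have h2 : Occ x v.dropLast ⊆ Occ x v := heq ▸ h1
  have h3 : occ x v.dropLast ≤ occ x v := Finset.card_le_card h2
  have h4 := occ_lt_occ_dropLast hρ hv hvs
  omega

/-- Let `ρ < 0`. The number of occurring `ρ`-avoided words `w` in `x` with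
`|w| > 2` is at most `2n`. -/
theorem stmt_16 {α : Type*} [DecidableEq α] (ρ : ℝ) (hρ : ρ < 0) (x : List α) :
    {w : List α | 2 < w.length ∧ 0 < occ x w ∧ stdDev x w ≤ ρ}.Finite ∧
    {w : List α | 2 < w.length ∧ 0 < occ x w ∧ stdDev x w ≤ ρ}.ncard ≤
      2 * x.length := by
  set S := {w : List α | 2 < w.length ∧ 0 < occ x w ∧ stdDev x w ≤ ρ} with hSdef
  have hOccne : ∀ w ∈ S, (Occ x w).Nonempty := by
    intro w hw
    exact Finset.card_pos.mp (occ_eq_card x w ▸ hw.2.1)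
  -- injectivity of `Occ x` on `S`
  have hinj : Set.InjOn (Occ x) S := by
    intro w hw v hv heq
    by_contra hne
    obtain ⟨i, hi⟩ := hOccne w hw
    have hi' : i ∈ Occ x v := heq ▸ hi
    rcases Occ_laminar hi hi' with h | h
    · exact occ_inj_aux hρ hv.2.1 hv.2.2 h hne heq
    · exact occ_inj_aux hρ hw.2.1 hw.2.2 h (Ne.symm hne) heq.symm
  -- the image is contained in the (finite) powerset of `range (n+1)`
  have himg : Occ x '' S ⊆ ↑((Finset.range (x.length + 1)).powerset) := by
    rintro _ ⟨w, -, rfl⟩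
    simp only [Finset.coe_powerset, Set.mem_preimage, Set.mem_powerset_iff,
      Finset.coe_subset]
    exact Finset.filter_subset _ _
  have himgfin : (Occ x '' S).Finite :=
    Set.Finite.subset ((Finset.range (x.length + 1)).powerset).finite_toSet himg
  have hSfin : S.Finite := Set.Finite.of_finite_image himgfin hinj
  refine ⟨hSfin, ?_⟩
  -- ground set: occurrences of words in `S` start before `n - 2`
  have hground : ∀ w ∈ S, Occ x w ⊆ Finset.range (x.length - 2) := by
    intro w hw i hi
    rw [mem_Occ] at hi
    have hlen : w.length ≤ (x.drop i).length := by
      have h := congrArg List.length hi.2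
      rw [List.length_take] at h
      omega
    rw [List.length_drop] at hlen
    have h3 := hw.1
    rw [Finset.mem_range]
    omega
  -- assemble the finite laminar family
  set L : Finset (Finset ℕ) := himgfin.toFinset with hLdef
  have hLmem : ∀ A ∈ L, ∃ w ∈ S, Occ x w = A := by
    intro A hA
    rw [hLdef, Set.Finite.mem_toFinset] at hA
    exact hA
  have hbound := laminar_bound L.card L (Finset.range (x.length - 2)) le_rfl
    (by
      intro A hA
      obtain ⟨w, hw, rfl⟩ := hLmem A hA
      exact ⟨hOccne w hw, hground w hw⟩)
    (by
      intro A hA B hB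
      obtain ⟨w, hw, rfl⟩ := hLmem A hA
      obtain ⟨v, hv, rfl⟩ := hLmem B hB
      by_cases hd : Disjoint (Occ x w) (Occ x v)
      · exact Or.inr (Or.inr hd)
      · rw [Finset.not_disjoint_iff] at hd
        obtain ⟨i, hiw, hiv⟩ := hd
        rcases Occ_laminar hiw hiv with h | h
        · exact Or.inr (Or.inl (Occ_anti x h))
        · exact Or.inl (Occ_anti x h))
  have hcardL : S.ncard = L.card := by
    rw [← Set.ncard_image_of_injOn hinj, hLdef, Set.ncard_eq_toFinset_card _ himgfin]
  rw [hcardL]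
  have := hbound.1
  rw [Finset.card_range] at this
  omega
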